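/- Let T and T₁ be triangulated categories and Q₀ : T → T₁ a fully faithful triangle functor admitting a left adjoint P₀ and a right adjoint P₁ (both triangle functors). Let M : T₁ → Arrow(T) be the functor sending X to the morphism αX : P₁X → P₀X characterized by the property that Q₀(αX) equals the composite Q₀P₁X → X → Q₀P₀X of the adjunction counit and unit. If M is an epivalence (i.e. M is full, conservative, and essentially surjective), then: (a) P₁ admits a fully faithful right adjoint whose essential image is Ker P₀ = {Y ∈ T₁ : P₀Y ≅ 0}; and (b) Hom_{T₁}(X, Y) = 0 for every X with P₁X ≅ 0 and every Y with P₀Y ≅ 0. -/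

import Mathlib

/-!
STATEMENT 19: Let `Q₀ : T ⥤ T₁` be a fully faithful triangle functor between
triangulated categories with a left adjoint `P₀` and a right adjoint `P₁` (both
triangle functors), and let `M : T₁ ⥤ Arrow T` send `X` to `αX : P₁X ⟶ P₀X` with
`Q₀(αX)` the composite of the adjunction morphisms `Q₀P₁X ⟶ X ⟶ Q₀P₀X`.  If `M` is an
epivalence (full, conservative and essentially surjective) then:
(a) `P₁` admits a fully faithful right adjoint whose essential image is `Ker P₀`; and
(b) `Hom(X, Y) = 0` whenever `P₁X ≅ 0` and `P₀Y ≅ 0`.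
-/

open CategoryTheory CategoryTheory.Limits CategoryTheory.Pretriangulated
open ZeroObject

universe v₁ v₂ u₁ u₂

namespace MorphicEnhancement

variable {T : Type u₁} [Category.{v₁} T] [Preadditive T] [HasZeroObject T]
  [HasShift T ℤ] [∀ n : ℤ, (shiftFunctor T n).Additive] [Pretriangulated T]
variable {T₁ : Type u₂} [Category.{v₂} T₁] [Preadditive T₁] [HasZeroObject T₁]
  [HasShift T₁ ℤ] [∀ n : ℤ, (shiftFunctor T₁ n).Additive] [Pretriangulated T₁]

variable (Q₀ : T ⥤ T₁) (P₀ P₁ : T₁ ⥤ T)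

/-- The functor `M : T₁ ⥤ Arrow T` sending `X` to `αX : P₁X ⟶ P₀X`, where
`Q₀ (αX)` is the composition `Q₀P₁X ⟶ X ⟶ Q₀P₀X` of the adjunction morphisms. -/
noncomputable def Mfun [Q₀.Full] [Q₀.Faithful] (adj₀ : P₀ ⊣ Q₀) (adj₁ : Q₀ ⊣ P₁) :
    T₁ ⥤ Arrow T where
  obj X := Arrow.mk (Q₀.preimage (adj₁.counit.app X ≫ adj₀.unit.app X))
  map {X Y} f := Arrow.homMk (u := P₁.map f) (v := P₀.map f) (by
    apply Q₀.map_injective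
    simp only [Arrow.mk_hom, Functor.map_comp, Functor.map_preimage]
    rw [← Category.assoc, adj₁.counit_naturality f, Category.assoc, Category.assoc,
      ← adj₀.unit_naturality f])
  map_id X := by
    apply Arrow.hom_ext <;> simp
  map_comp f g := by
    apply Arrow.hom_ext <;> simp

section Aux

variable [Q₀.Full] [Q₀.Faithful] (adj₀ : P₀ ⊣ Q₀) (adj₁ : Q₀ ⊣ P₁)

lemma Mfun_map_left {X Y : T₁} (f : X ⟶ Y) :
    ((Mfun Q₀ P₀ P₁ adj₀ adj₁).map f).left = P₁.map f := rfl

lemma Mfun_map_right {X Y : T₁} (f : X ⟶ Y) :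
    ((Mfun Q₀ P₀ P₁ adj₀ adj₁).map f).right = P₀.map f := rfl

variable [P₁.CommShift ℤ] [P₁.IsTriangulated]
variable [(Mfun Q₀ P₀ P₁ adj₀ adj₁).Full]

/-- Part (b): homs from `Ker P₁` to `Ker P₀` vanish. -/
theorem hom_vanish
    (hcons : ∀ {X Y : T₁} (f : X ⟶ Y),
      IsIso ((Mfun Q₀ P₀ P₁ adj₀ adj₁).map f) → IsIso f)
    {X Y : T₁} (hX : IsZero (P₁.obj X)) (hY : IsZero (P₀.obj Y))
    (f : X ⟶ Y) : f = 0 := by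
  obtain ⟨C, g, h, hT⟩ := Pretriangulated.distinguished_cocone_triangle f
  have hT' := P₁.map_distinguished _ hT
  have hg : IsIso (P₁.map g) := by
    have := (Pretriangulated.Triangle.isZero₁_iff_isIso₂ _ hT').1 (by simpa using hX)
    exact this
  let ρ : (Mfun Q₀ P₀ P₁ adj₀ adj₁).obj C ⟶ (Mfun Q₀ P₀ P₁ adj₀ adj₁).obj Y :=
    Arrow.homMk (u := (inv (P₁.map g) : P₁.obj C ⟶ P₁.obj Y)) (v := 0) (hY.eq_of_tgt _ _)
  let r : C ⟶ Y := (Mfun Q₀ P₀ P₁ adj₀ adj₁).preimage ρ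
  have hr : P₁.map r = inv (P₁.map g) := by
    have h1 := (Mfun Q₀ P₀ P₁ adj₀ adj₁).map_preimage ρ
    have h2 := congrArg CommaMorphism.left h1
    exact h2
  have hiso : (Mfun Q₀ P₀ P₁ adj₀ adj₁).map (g ≫ r)
      = 𝟙 ((Mfun Q₀ P₀ P₁ adj₀ adj₁).obj Y) := by
    apply Arrow.hom_ext
    · show P₁.map (g ≫ r) = 𝟙 (P₁.obj Y)
      rw [P₁.map_comp, hr, IsIso.hom_inv_id]
    · exact hY.eq_of_src _ _
  have hgr : IsIso (g ≫ r) := hcons _ (by rw [hiso]; infer_instance)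
  have hfg : f ≫ g = 0 := Pretriangulated.comp_distTriang_mor_zero₁₂ _ hT
  have h0 : f ≫ (g ≫ r) = 0 := by rw [← Category.assoc, hfg, zero_comp]
  calc f = (f ≫ (g ≫ r)) ≫ inv (g ≫ r) := by simp
    _ = 0 := by rw [h0, zero_comp]

/-- Key lemma: morphisms into `Ker P₀` are detected by `P₁`. -/
theorem hom_ext_of_P₁
    (hcons : ∀ {X Y : T₁} (f : X ⟶ Y),
      IsIso ((Mfun Q₀ P₀ P₁ adj₀ adj₁).map f) → IsIso f)
    {X Y : T₁} (hY : IsZero (P₀.obj Y)) (f f' : X ⟶ Y)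
    (hff' : P₁.map f = P₁.map f') : f = f' := by
  have e1 : adj₁.counit.app X ≫ f = adj₁.counit.app X ≫ f' := by
    apply (adj₁.homEquiv _ _).injective
    rw [Adjunction.homEquiv_unit, Adjunction.homEquiv_unit, P₁.map_comp, P₁.map_comp,
      ← Category.assoc, ← Category.assoc, adj₁.right_triangle_components, hff']
  have hε : adj₁.counit.app X ≫ (f - f') = 0 := by
    rw [Preadditive.comp_sub, e1, sub_self]
  obtain ⟨W, p, q, hT⟩ := Pretriangulated.distinguished_cocone_triangle (adj₁.counit.app X)
  obtain ⟨e, he⟩ := Pretriangulated.Triangle.yoneda_exact₂ _ hT (f - f') hε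
  have hW : IsZero (P₁.obj W) := by
    have hT' := P₁.map_distinguished _ hT
    have hiso : IsIso (adj₁.unit.app (P₁.obj X) ≫ P₁.map (adj₁.counit.app X)) := by
      rw [adj₁.right_triangle_components]; exact inferInstanceAs (IsIso (𝟙 (P₁.obj X)))
    have : IsIso (P₁.map (adj₁.counit.app X)) :=
      IsIso.of_isIso_comp_left (adj₁.unit.app (P₁.obj X)) _
    have := Pretriangulated.Triangle.isZero₃_of_isIso₁ _ hT' (by exact this)
    simpa using this
  have he0 : e = 0 := hom_vanish Q₀ P₀ P₁ adj₀ adj₁ hcons hW hY e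
  have : f - f' = 0 := by rw [he, he0, comp_zero]; rfl
  exact sub_eq_zero.1 this

variable [(Mfun Q₀ P₀ P₁ adj₀ adj₁).EssSurj]

/-- Object part of the right adjoint of `P₁`. -/
noncomputable def Robj (Z : T) : T₁ :=
  (Mfun Q₀ P₀ P₁ adj₀ adj₁).objPreimage (Arrow.mk (0 : Z ⟶ (0 : T)))

noncomputable def RobjIso (Z : T) :
    (Mfun Q₀ P₀ P₁ adj₀ adj₁).obj (Robj Q₀ P₀ P₁ adj₀ adj₁ Z)
      ≅ Arrow.mk (0 : Z ⟶ (0 : T)) :=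
  (Mfun Q₀ P₀ P₁ adj₀ adj₁).objObjPreimageIso _

lemma RobjZero (Z : T) : IsZero (P₀.obj (Robj Q₀ P₀ P₁ adj₀ adj₁ Z)) :=
  (isZero_zero T).of_iso (Arrow.rightFunc.mapIso (RobjIso Q₀ P₀ P₁ adj₀ adj₁ Z))

/-- The comparison map. -/
noncomputable def βfun (X : T₁) (Z : T) (f : X ⟶ Robj Q₀ P₀ P₁ adj₀ adj₁ Z) :
    P₁.obj X ⟶ Z :=
  P₁.map f ≫ (RobjIso Q₀ P₀ P₁ adj₀ adj₁ Z).hom.left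

lemma βfun_surjective (X : T₁) (Z : T) :
    Function.Surjective (βfun Q₀ P₀ P₁ adj₀ adj₁ X Z) := by
  intro g
  let φ : (Mfun Q₀ P₀ P₁ adj₀ adj₁).obj X ⟶ Arrow.mk (0 : Z ⟶ (0 : T)) :=
    Arrow.homMk (u := g) (v := 0) ((isZero_zero T).eq_of_tgt _ _)
  refine ⟨(Mfun Q₀ P₀ P₁ adj₀ adj₁).preimage (φ ≫ (RobjIso Q₀ P₀ P₁ adj₀ adj₁ Z).inv), ?_⟩
  have h1 : P₁.map ((Mfun Q₀ P₀ P₁ adj₀ adj₁).preimage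
        (φ ≫ (RobjIso Q₀ P₀ P₁ adj₀ adj₁ Z).inv))
      = (φ ≫ (RobjIso Q₀ P₀ P₁ adj₀ adj₁ Z).inv).left := by
    rw [← Mfun_map_left Q₀ P₀ P₁ adj₀ adj₁, Functor.map_preimage]
  show P₁.map _ ≫ _ = g
  rw [h1]
  have h2 : (φ ≫ (RobjIso Q₀ P₀ P₁ adj₀ adj₁ Z).inv) ≫ (RobjIso Q₀ P₀ P₁ adj₀ adj₁ Z).hom = φ := by
    simp
  exact Comma.comp_left.symm.trans (congrArg CommaMorphism.left h2)

lemma βfun_injective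
    (hcons : ∀ {X Y : T₁} (f : X ⟶ Y),
      IsIso ((Mfun Q₀ P₀ P₁ adj₀ adj₁).map f) → IsIso f)
    (X : T₁) (Z : T) :
    Function.Injective (βfun Q₀ P₀ P₁ adj₀ adj₁ X Z) := by
  intro f f' hf
  have hl : IsIso ((RobjIso Q₀ P₀ P₁ adj₀ adj₁ Z).hom.left) :=
    inferInstanceAs (IsIso (Arrow.leftFunc.map (RobjIso Q₀ P₀ P₁ adj₀ adj₁ Z).hom))
  have : P₁.map f = P₁.map f' := by
    have := hf
    rw [βfun, βfun] at this
    exact (cancel_mono (Arrow.leftFunc.mapIso (RobjIso Q₀ P₀ P₁ adj₀ adj₁ Z)).hom).1 this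
  exact hom_ext_of_P₁ Q₀ P₀ P₁ adj₀ adj₁ hcons (RobjZero Q₀ P₀ P₁ adj₀ adj₁ Z) f f' this


noncomputable def radjEquiv
    (hcons : ∀ {X Y : T₁} (f : X ⟶ Y),
      IsIso ((Mfun Q₀ P₀ P₁ adj₀ adj₁).map f) → IsIso f)
    (X : T₁) (Z : T) :
    (P₁.obj X ⟶ Z) ≃ (X ⟶ Robj Q₀ P₀ P₁ adj₀ adj₁ Z) :=
  (Equiv.ofBijective (βfun Q₀ P₀ P₁ adj₀ adj₁ X Z)
    ⟨βfun_injective Q₀ P₀ P₁ adj₀ adj₁ hcons X Z,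
     βfun_surjective Q₀ P₀ P₁ adj₀ adj₁ X Z⟩).symm

lemma βfun_radjEquiv
    (hcons : ∀ {X Y : T₁} (f : X ⟶ Y),
      IsIso ((Mfun Q₀ P₀ P₁ adj₀ adj₁).map f) → IsIso f)
    (X : T₁) (Z : T) (g : P₁.obj X ⟶ Z) :
    βfun Q₀ P₀ P₁ adj₀ adj₁ X Z (radjEquiv Q₀ P₀ P₁ adj₀ adj₁ hcons X Z g) = g :=
  Equiv.apply_symm_apply (Equiv.ofBijective (βfun Q₀ P₀ P₁ adj₀ adj₁ X Z)
    ⟨βfun_injective Q₀ P₀ P₁ adj₀ adj₁ hcons X Z,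
     βfun_surjective Q₀ P₀ P₁ adj₀ adj₁ X Z⟩) g

lemma radjEquiv_natural
    (hcons : ∀ {X Y : T₁} (f : X ⟶ Y),
      IsIso ((Mfun Q₀ P₀ P₁ adj₀ adj₁).map f) → IsIso f)
    {X' X : T₁} (Z : T) (f : X' ⟶ X) (g : P₁.obj X ⟶ Z) :
    radjEquiv Q₀ P₀ P₁ adj₀ adj₁ hcons X' Z (P₁.map f ≫ g)
      = f ≫ radjEquiv Q₀ P₀ P₁ adj₀ adj₁ hcons X Z g := by
  apply βfun_injective Q₀ P₀ P₁ adj₀ adj₁ hcons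
  rw [βfun_radjEquiv]
  show P₁.map f ≫ g = P₁.map (f ≫ _) ≫ _
  rw [P₁.map_comp]; refine Eq.trans ?_ (Category.assoc _ _ _).symm
  exact congrArg (fun t => P₁.map f ≫ t)
    (βfun_radjEquiv Q₀ P₀ P₁ adj₀ adj₁ hcons X Z g).symm

/-- The right adjoint of `P₁`. -/
noncomputable def Radj
    (hcons : ∀ {X Y : T₁} (f : X ⟶ Y),
      IsIso ((Mfun Q₀ P₀ P₁ adj₀ adj₁).map f) → IsIso f) : T ⥤ T₁ :=
  Adjunction.rightAdjointOfEquiv (radjEquiv Q₀ P₀ P₁ adj₀ adj₁ hcons)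
    (fun _ _ Z f g => radjEquiv_natural Q₀ P₀ P₁ adj₀ adj₁ hcons Z f g)

/-- The adjunction `P₁ ⊣ Radj`. -/
noncomputable def RadjAdj
    (hcons : ∀ {X Y : T₁} (f : X ⟶ Y),
      IsIso ((Mfun Q₀ P₀ P₁ adj₀ adj₁).map f) → IsIso f) :
    P₁ ⊣ Radj Q₀ P₀ P₁ adj₀ adj₁ hcons :=
  Adjunction.adjunctionOfEquivRight _ _

lemma βfun_Radj_map
    (hcons : ∀ {X Y : T₁} (f : X ⟶ Y),
      IsIso ((Mfun Q₀ P₀ P₁ adj₀ adj₁).map f) → IsIso f)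
    {Z Z' : T} (g : Z ⟶ Z') :
    βfun Q₀ P₀ P₁ adj₀ adj₁ (Robj Q₀ P₀ P₁ adj₀ adj₁ Z) Z'
        ((Radj Q₀ P₀ P₁ adj₀ adj₁ hcons).map g)
      = (RobjIso Q₀ P₀ P₁ adj₀ adj₁ Z).hom.left ≫ g := by
  have h1 : (radjEquiv Q₀ P₀ P₁ adj₀ adj₁ hcons (Robj Q₀ P₀ P₁ adj₀ adj₁ Z) Z).symm
        (𝟙 (Robj Q₀ P₀ P₁ adj₀ adj₁ Z))
      = (RobjIso Q₀ P₀ P₁ adj₀ adj₁ Z).hom.left := by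
    show P₁.map (𝟙 _) ≫ _ = _
    rw [P₁.map_id]; exact Category.id_comp _
  have h0 : (Radj Q₀ P₀ P₁ adj₀ adj₁ hcons).map g
      = radjEquiv Q₀ P₀ P₁ adj₀ adj₁ hcons (Robj Q₀ P₀ P₁ adj₀ adj₁ Z) Z'
          ((radjEquiv Q₀ P₀ P₁ adj₀ adj₁ hcons (Robj Q₀ P₀ P₁ adj₀ adj₁ Z) Z).symm
              (𝟙 (Robj Q₀ P₀ P₁ adj₀ adj₁ Z)) ≫ g) := rfl
  rw [h0, h1]
  exact βfun_radjEquiv Q₀ P₀ P₁ adj₀ adj₁ hcons _ _ _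

lemma isIso_RobjIso_hom_left (Z : T) :
    IsIso ((RobjIso Q₀ P₀ P₁ adj₀ adj₁ Z).hom.left) :=
  inferInstanceAs (IsIso (Arrow.leftFunc.map (RobjIso Q₀ P₀ P₁ adj₀ adj₁ Z).hom))

lemma Radj_faithful
    (hcons : ∀ {X Y : T₁} (f : X ⟶ Y),
      IsIso ((Mfun Q₀ P₀ P₁ adj₀ adj₁).map f) → IsIso f) :
    (Radj Q₀ P₀ P₁ adj₀ adj₁ hcons).Faithful := by
  constructor
  intro Z Z' g g' hgg
  have h1 := βfun_Radj_map Q₀ P₀ P₁ adj₀ adj₁ hcons g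
  have h2 := βfun_Radj_map Q₀ P₀ P₁ adj₀ adj₁ hcons g'
  rw [hgg, h2] at h1
  have hl := isIso_RobjIso_hom_left Q₀ P₀ P₁ adj₀ adj₁ Z
  exact ((cancel_epi _).1 h1.symm)

lemma Radj_full
    (hcons : ∀ {X Y : T₁} (f : X ⟶ Y),
      IsIso ((Mfun Q₀ P₀ P₁ adj₀ adj₁).map f) → IsIso f) :
    (Radj Q₀ P₀ P₁ adj₀ adj₁ hcons).Full := by
  constructor
  intro Z Z' w
  have hl := isIso_RobjIso_hom_left Q₀ P₀ P₁ adj₀ adj₁ Z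
  refine ⟨inv ((RobjIso Q₀ P₀ P₁ adj₀ adj₁ Z).hom.left)
      ≫ βfun Q₀ P₀ P₁ adj₀ adj₁ (Robj Q₀ P₀ P₁ adj₀ adj₁ Z) Z' w,
    βfun_injective Q₀ P₀ P₁ adj₀ adj₁ hcons (Robj Q₀ P₀ P₁ adj₀ adj₁ Z) Z' ?_⟩
  rw [βfun_Radj_map]; exact IsIso.hom_inv_id_assoc _ _

lemma Radj_essImage
    (hcons : ∀ {X Y : T₁} (f : X ⟶ Y),
      IsIso ((Mfun Q₀ P₀ P₁ adj₀ adj₁).map f) → IsIso f)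
    (Y : T₁) :
    (Radj Q₀ P₀ P₁ adj₀ adj₁ hcons).essImage Y ↔ IsZero (P₀.obj Y) := by
  constructor
  · rintro ⟨Z, ⟨φ⟩⟩
    exact (RobjZero Q₀ P₀ P₁ adj₀ adj₁ Z).of_iso (P₀.mapIso φ.symm)
  · intro hY
    let χ : (Mfun Q₀ P₀ P₁ adj₀ adj₁).obj Y ⟶ Arrow.mk (0 : P₁.obj Y ⟶ (0 : T)) :=
      Arrow.homMk (u := 𝟙 (P₁.obj Y)) (v := 0) ((isZero_zero T).eq_of_tgt _ _)
    have hχ : IsIso χ := by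
      refine ⟨Arrow.homMk (u := 𝟙 (P₁.obj Y)) (v := 0) (hY.eq_of_tgt _ _), ?_, ?_⟩
      · apply Arrow.hom_ext
        · show 𝟙 (P₁.obj Y) ≫ 𝟙 (P₁.obj Y) = 𝟙 (P₁.obj Y)
          simp
        · exact hY.eq_of_src _ _
      · apply Arrow.hom_ext
        · show 𝟙 (P₁.obj Y) ≫ 𝟙 (P₁.obj Y) = 𝟙 (P₁.obj Y)
          simp
        · exact (isZero_zero T).eq_of_src _ _
    let f : Y ⟶ Robj Q₀ P₀ P₁ adj₀ adj₁ (P₁.obj Y) :=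
      (Mfun Q₀ P₀ P₁ adj₀ adj₁).preimage
        (χ ≫ (RobjIso Q₀ P₀ P₁ adj₀ adj₁ (P₁.obj Y)).inv)
    have hMf : (Mfun Q₀ P₀ P₁ adj₀ adj₁).map f
        = χ ≫ (RobjIso Q₀ P₀ P₁ adj₀ adj₁ (P₁.obj Y)).inv :=
      Functor.map_preimage _ _
    have hf : IsIso f := hcons f (by rw [hMf]; exact inferInstance)
    exact ⟨P₁.obj Y, ⟨(asIso f).symm⟩⟩

end Aux

theorem epivalence_morphic_enhancement [Q₀.Full] [Q₀.Faithful]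
    [Q₀.CommShift ℤ] [Q₀.IsTriangulated]
    [P₀.CommShift ℤ] [P₀.IsTriangulated]
    [P₁.CommShift ℤ] [P₁.IsTriangulated]
    (adj₀ : P₀ ⊣ Q₀) (adj₁ : Q₀ ⊣ P₁)
    (hfull : (Mfun Q₀ P₀ P₁ adj₀ adj₁).Full)
    (hconservative : ∀ {X Y : T₁} (f : X ⟶ Y),
      IsIso ((Mfun Q₀ P₀ P₁ adj₀ adj₁).map f) → IsIso f)
    (hessSurj : (Mfun Q₀ P₀ P₁ adj₀ adj₁).EssSurj) :
    (∃ (R : T ⥤ T₁) (_ : P₁ ⊣ R), R.Full ∧ R.Faithful ∧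
      ∀ Y : T₁, R.essImage Y ↔ Limits.IsZero (P₀.obj Y)) ∧
    (∀ X Y : T₁, Limits.IsZero (P₁.obj X) → Limits.IsZero (P₀.obj Y) →
      ∀ f : X ⟶ Y, f = 0) := by
  letI := hfull
  letI := hessSurj
  exact ⟨⟨Radj Q₀ P₀ P₁ adj₀ adj₁ hconservative,
    RadjAdj Q₀ P₀ P₁ adj₀ adj₁ hconservative,
    Radj_full Q₀ P₀ P₁ adj₀ adj₁ hconservative,
    Radj_faithful Q₀ P₀ P₁ adj₀ adj₁ hconservative,
    Radj_essImage Q₀ P₀ P₁ adj₀ adj₁ hconservative⟩,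
    fun X Y hX hY f => hom_vanish Q₀ P₀ P₁ adj₀ adj₁ hconservative hX hY f⟩

end MorphicEnhancement
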